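/- arXiv:1208.2905 — 2 statements merged into one kernel-verified Lean document; each statement's English description precedes it below -/
import Mathlib

section
/- Let n ∈ ℕ, let α_j, γ_j ∈ ℂ be nonzero for j = 1,…,n, let β_j ∈ ℂ, and let g_j : ℂ → ℂ be twice differentiable. Set ζ_j = γ_j²/α_j and λ_j = −α_j²/γ_j, and define ϑ : ℂ⁴ → ℂ (variables (x,r,t,z)) by ϑ = Σ_{j=1}^{n} g_j(α_j x + γ_j r + ζ_j t + λ_j z + β_j). Then ϑ satisfies the higher-symmetry system: ϑ_{rr} − ϑ_{xt} = 0, ϑ_{rx} + ϑ_{tz} = 0, and ϑ_{xx} + ϑ_{rz} = 0 at every point (subclass I). -/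
/-- Partial derivative with respect to the first argument. -/
noncomputable def pd1 (f : ℂ → ℂ → ℂ → ℂ → ℂ) (a b c d : ℂ) : ℂ :=
  deriv (fun s => f s b c d) a

/-- Partial derivative with respect to the second argument. -/
noncomputable def pd2 (f : ℂ → ℂ → ℂ → ℂ → ℂ) (a b c d : ℂ) : ℂ :=
  deriv (fun s => f a s c d) b

/-- Partial derivative with respect to the third argument. -/
noncomputable def pd3 (f : ℂ → ℂ → ℂ → ℂ → ℂ) (a b c d : ℂ) : ℂ :=
  deriv (fun s => f a b s d) c

/-- Partial derivative with respect to the fourth argument. -/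
noncomputable def pd4 (f : ℂ → ℂ → ℂ → ℂ → ℂ) (a b c d : ℂ) : ℂ :=
  deriv (fun s => f a b c s) d


lemma sum_deriv (n : ℕ) (g : Fin n → ℂ → ℂ) (hg : ∀ j, Differentiable ℂ (g j))
    (d c b : Fin n → ℂ) (s : ℂ) :
    deriv (fun u : ℂ => ∑ j, d j * g j (c j * u + b j)) s
      = ∑ j, d j * c j * deriv (g j) (c j * s + b j) := by
  have h : ∀ j : Fin n, HasDerivAt (fun u : ℂ => d j * g j (c j * u + b j))
      (d j * c j * deriv (g j) (c j * s + b j)) s := by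
    intro j
    have h1 : HasDerivAt (fun u : ℂ => c j * u + b j) (c j) s := by
      simpa using ((hasDerivAt_id s).const_mul (c j)).add_const (b j)
    have h2 := (((hg j).differentiableAt.hasDerivAt).comp s h1).const_mul (d j)
    exact h2.congr_deriv (by ring)
  exact (HasDerivAt.fun_sum (fun j _ => h j)).deriv

lemma hg1' (g : ℂ → ℂ) (hg : ContDiff ℂ 2 g) : Differentiable ℂ g :=
  hg.differentiable (by norm_num)

lemma hg2' (g : ℂ → ℂ) (hg : ContDiff ℂ 2 g) : Differentiable ℂ (deriv g) := by
  have h : ContDiff ℂ ((1 : ℕ∞) + 1) g := by norm_num at hg ⊢; exact_mod_cast hg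
  have := (contDiff_succ_iff_deriv.mp h).2.2
  exact this.differentiable (by norm_num)

lemma master2 (n : ℕ) (g : Fin n → ℂ → ℂ) (hg : ∀ j, ContDiff ℂ 2 (g j))
    (c b : Fin n → ℂ) (s0 : ℂ) :
    deriv (fun s : ℂ => deriv (fun u : ℂ => ∑ j, g j (c j * u + b j)) s) s0
      = ∑ j, c j * c j * deriv (deriv (g j)) (c j * s0 + b j) := by
  have step : ∀ s : ℂ, deriv (fun u : ℂ => ∑ j, g j (c j * u + b j)) s
      = ∑ j, c j * deriv (g j) (c j * s + b j) := by
    intro s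
    have h := sum_deriv n g (fun j => hg1' _ (hg j)) (fun _ => 1) c b s
    simpa using h
  simp only [step]
  exact sum_deriv n (fun j => deriv (g j)) (fun j => hg2' _ (hg j)) c c b s0

lemma master (n : ℕ) (g : Fin n → ℂ → ℂ) (hg : ∀ j, ContDiff ℂ 2 (g j))
    (c1 c2 b : Fin n → ℂ) (u0 s0 : ℂ) :
    deriv (fun s : ℂ => deriv (fun u : ℂ => ∑ j, g j (c1 j * u + c2 j * s + b j)) u0) s0
      = ∑ j, c1 j * c2 j * deriv (deriv (g j)) (c1 j * u0 + c2 j * s0 + b j) := by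
  have step : ∀ s : ℂ, deriv (fun u : ℂ => ∑ j, g j (c1 j * u + c2 j * s + b j)) u0
      = ∑ j, c1 j * deriv (g j) (c1 j * u0 + c2 j * s + b j) := by
    intro s
    have h := sum_deriv n g (fun j => hg1' _ (hg j)) (fun _ => 1) c1
      (fun j => c2 j * s + b j) u0
    simpa [← add_assoc] using h
  simp only [step]
  have h := sum_deriv n (fun j => deriv (g j)) (fun j => hg2' _ (hg j)) c1 c2
    (fun j => c1 j * u0 + b j) s0
  rw [show (fun s : ℂ => ∑ j, c1 j * deriv (g j) (c1 j * u0 + c2 j * s + b j))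
      = (fun s : ℂ => ∑ j, c1 j * deriv (g j) (c2 j * s + (c1 j * u0 + b j))) from
    funext fun s => Finset.sum_congr rfl fun j _ => by
      rw [show c1 j * u0 + c2 j * s + b j = c2 j * s + (c1 j * u0 + b j) by ring], h]
  exact Finset.sum_congr rfl fun j _ => by
    rw [show c2 j * s0 + (c1 j * u0 + b j) = c1 j * u0 + c2 j * s0 + b j by ring]


/-- the functional-sum ansatz (subclass I) solves the
higher-symmetry system arising from the Legendre-transformed second heavenly
equation. -/
theorem stmt11 (n : ℕ) (α γ : Fin n → ℂ)
    (hα : ∀ j, α j ≠ 0) (hγ : ∀ j, γ j ≠ 0) (β : Fin n → ℂ)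
    (g : Fin n → ℂ → ℂ) (hg : ∀ j, ContDiff ℂ 2 (g j))
    (ζ lam : Fin n → ℂ)
    (hζ : ∀ j, ζ j = (γ j) ^ 2 / α j)
    (hlam : ∀ j, lam j = -((α j) ^ 2 / γ j))
    (ϑ : ℂ → ℂ → ℂ → ℂ → ℂ)
    (hϑ : ϑ = fun x r t z =>
      ∑ j : Fin n, g j (α j * x + γ j * r + ζ j * t + lam j * z + β j)) :
    ∀ x r t z : ℂ,
      pd2 (pd2 ϑ) x r t z - pd1 (pd3 ϑ) x r t z = 0
      ∧ pd2 (pd1 ϑ) x r t z + pd3 (pd4 ϑ) x r t z = 0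
      ∧ pd1 (pd1 ϑ) x r t z + pd2 (pd4 ϑ) x r t z = 0 := by
  intro x r t z
  subst hϑ
  simp only [pd1, pd2, pd3, pd4]
  have h1 : deriv (fun s : ℂ => deriv (fun u : ℂ =>
      ∑ j, g j (α j * x + γ j * u + ζ j * t + lam j * z + β j)) s) r
      = ∑ j, γ j * γ j * deriv (deriv (g j))
          (α j * x + γ j * r + ζ j * t + lam j * z + β j) := by
    rw [show (fun u : ℂ => ∑ j, g j (α j * x + γ j * u + ζ j * t + lam j * z + β j))
        = fun u : ℂ => ∑ j, g j (γ j * u + (α j * x + ζ j * t + lam j * z + β j)) from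
      funext fun u => Finset.sum_congr rfl fun j _ => congrArg (g j) (by ring)]
    rw [master2 n g hg γ (fun j => α j * x + ζ j * t + lam j * z + β j) r]
    exact Finset.sum_congr rfl fun j _ => by
      rw [show γ j * r + (α j * x + ζ j * t + lam j * z + β j)
        = α j * x + γ j * r + ζ j * t + lam j * z + β j by ring]
  have h2 : deriv (fun s : ℂ => deriv (fun u : ℂ =>
      ∑ j, g j (α j * s + γ j * r + ζ j * u + lam j * z + β j)) t) x
      = ∑ j, ζ j * α j * deriv (deriv (g j))
          (α j * x + γ j * r + ζ j * t + lam j * z + β j) := by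
    rw [show (fun s : ℂ => deriv (fun u : ℂ =>
          ∑ j, g j (α j * s + γ j * r + ζ j * u + lam j * z + β j)) t)
        = fun s : ℂ => deriv (fun u : ℂ =>
          ∑ j, g j (ζ j * u + α j * s + (γ j * r + lam j * z + β j))) t from
      funext fun s => congrArg (fun f : ℂ → ℂ => deriv f t)
        (funext fun u => Finset.sum_congr rfl fun j _ => congrArg (g j) (by ring))]
    rw [master n g hg ζ α (fun j => γ j * r + lam j * z + β j) t x]
    exact Finset.sum_congr rfl fun j _ => by
      rw [show ζ j * t + α j * x + (γ j * r + lam j * z + β j)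
        = α j * x + γ j * r + ζ j * t + lam j * z + β j by ring]
  have h3 : deriv (fun s : ℂ => deriv (fun u : ℂ =>
      ∑ j, g j (α j * u + γ j * s + ζ j * t + lam j * z + β j)) x) r
      = ∑ j, α j * γ j * deriv (deriv (g j))
          (α j * x + γ j * r + ζ j * t + lam j * z + β j) := by
    rw [show (fun s : ℂ => deriv (fun u : ℂ =>
          ∑ j, g j (α j * u + γ j * s + ζ j * t + lam j * z + β j)) x)
        = fun s : ℂ => deriv (fun u : ℂ =>
          ∑ j, g j (α j * u + γ j * s + (ζ j * t + lam j * z + β j))) x from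
      funext fun s => congrArg (fun f : ℂ → ℂ => deriv f x)
        (funext fun u => Finset.sum_congr rfl fun j _ => congrArg (g j) (by ring))]
    rw [master n g hg α γ (fun j => ζ j * t + lam j * z + β j) x r]
    exact Finset.sum_congr rfl fun j _ => by
      rw [show α j * x + γ j * r + (ζ j * t + lam j * z + β j)
        = α j * x + γ j * r + ζ j * t + lam j * z + β j by ring]
  have h4 : deriv (fun s : ℂ => deriv (fun u : ℂ =>
      ∑ j, g j (α j * x + γ j * r + ζ j * s + lam j * u + β j)) z) t
      = ∑ j, lam j * ζ j * deriv (deriv (g j))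
          (α j * x + γ j * r + ζ j * t + lam j * z + β j) := by
    rw [show (fun s : ℂ => deriv (fun u : ℂ =>
          ∑ j, g j (α j * x + γ j * r + ζ j * s + lam j * u + β j)) z)
        = fun s : ℂ => deriv (fun u : ℂ =>
          ∑ j, g j (lam j * u + ζ j * s + (α j * x + γ j * r + β j))) z from
      funext fun s => congrArg (fun f : ℂ → ℂ => deriv f z)
        (funext fun u => Finset.sum_congr rfl fun j _ => congrArg (g j) (by ring))]
    rw [master n g hg lam ζ (fun j => α j * x + γ j * r + β j) z t]
    exact Finset.sum_congr rfl fun j _ => by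
      rw [show lam j * z + ζ j * t + (α j * x + γ j * r + β j)
        = α j * x + γ j * r + ζ j * t + lam j * z + β j by ring]
  have h5 : deriv (fun s : ℂ => deriv (fun u : ℂ =>
      ∑ j, g j (α j * u + γ j * r + ζ j * t + lam j * z + β j)) s) x
      = ∑ j, α j * α j * deriv (deriv (g j))
          (α j * x + γ j * r + ζ j * t + lam j * z + β j) := by
    rw [show (fun u : ℂ => ∑ j, g j (α j * u + γ j * r + ζ j * t + lam j * z + β j))
        = fun u : ℂ => ∑ j, g j (α j * u + (γ j * r + ζ j * t + lam j * z + β j)) from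
      funext fun u => Finset.sum_congr rfl fun j _ => congrArg (g j) (by ring)]
    rw [master2 n g hg α (fun j => γ j * r + ζ j * t + lam j * z + β j) x]
    exact Finset.sum_congr rfl fun j _ => by
      rw [show α j * x + (γ j * r + ζ j * t + lam j * z + β j)
        = α j * x + γ j * r + ζ j * t + lam j * z + β j by ring]
  have h6 : deriv (fun s : ℂ => deriv (fun u : ℂ =>
      ∑ j, g j (α j * x + γ j * s + ζ j * t + lam j * u + β j)) z) r
      = ∑ j, lam j * γ j * deriv (deriv (g j))
          (α j * x + γ j * r + ζ j * t + lam j * z + β j) := by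
    rw [show (fun s : ℂ => deriv (fun u : ℂ =>
          ∑ j, g j (α j * x + γ j * s + ζ j * t + lam j * u + β j)) z)
        = fun s : ℂ => deriv (fun u : ℂ =>
          ∑ j, g j (lam j * u + γ j * s + (α j * x + ζ j * t + β j))) z from
      funext fun s => congrArg (fun f : ℂ → ℂ => deriv f z)
        (funext fun u => Finset.sum_congr rfl fun j _ => congrArg (g j) (by ring))]
    rw [master n g hg lam γ (fun j => α j * x + ζ j * t + β j) z r]
    exact Finset.sum_congr rfl fun j _ => by
      rw [show lam j * z + γ j * r + (α j * x + ζ j * t + β j)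
        = α j * x + γ j * r + ζ j * t + lam j * z + β j by ring]
  refine ⟨?_, ?_, ?_⟩
  · rw [h1, h2, ← Finset.sum_sub_distrib]
    refine Finset.sum_eq_zero fun j _ => ?_
    have hc : ζ j * α j = γ j * γ j := by
      rw [hζ j, div_mul_cancel₀ _ (hα j)]; ring
    rw [hc, sub_self]
  · rw [h3, h4, ← Finset.sum_add_distrib]
    refine Finset.sum_eq_zero fun j _ => ?_
    have hc : lam j * ζ j = -(α j * γ j) := by
      rw [hlam j, hζ j]
      field_simp [hα j, hγ j]
    rw [hc]; ring
  · rw [h5, h6, ← Finset.sum_add_distrib]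
    refine Finset.sum_eq_zero fun j _ => ?_
    have hc : lam j * γ j = -(α j * α j) := by
      rw [hlam j, neg_mul, div_mul_cancel₀ _ (hγ j)]; ring
    rw [hc]; ring
end

section
/- Let n ∈ ℕ, let α_j ∈ ℂ and γ_j ∈ ℂ with γ_j ≠ 0 for j = 1,…,n, let β_j ∈ ℂ, and let g_j : ℂ → ℂ be twice differentiable. Set ζ_j = (α_j² + γ_j²)/γ_j and λ_j = −(α_j²γ_j + γ_j³ − α_j³ − α_jγ_j²)/γ_j², and define w : ℂ⁴ → ℂ (variables (η,ξ,q,y)) by w = Σ_{j=1}^{n} g_j(α_j η + γ_j ξ + ζ_j q + λ_j y + β_j). Then w satisfies the linear system: w_{ηη} + w_{ξξ} − w_{ξq} = 0, w_{ξq} − w_{ηq} + w_{ξy} = 0, and w_{ξq} + w_{ηq} − w_{qq} + w_{ηy} = 0 at every point. -/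
lemma key {n : ℕ} (g : Fin n → ℂ → ℂ) (hg : ∀ j, Differentiable ℂ (g j))
    (c : Fin n → ℂ) (A : Fin n → ℂ → ℂ) (t : ℂ)
    (hA : ∀ j, HasDerivAt (A j) (c j) t) :
    deriv (fun s => ∑ j : Fin n, g j (A j s)) t
      = ∑ j : Fin n, c j * deriv (g j) (A j t) := by
  have h : HasDerivAt (fun s => ∑ j : Fin n, g j (A j s))
      (∑ j : Fin n, c j * deriv (g j) (A j t)) t := by
    apply HasDerivAt.fun_sum
    intro j _
    have h2 := (((hg j) (A j t)).hasDerivAt).comp t (hA j)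
    simpa [mul_comm, Function.comp_def] using h2
  exact h.deriv

/-- the functional-sum ansatz solves the linear system arising
from the Legendre-transformed mixed heavenly equation (θ = 1). -/
theorem stmt16 (n : ℕ) (α γ : Fin n → ℂ) (hγ : ∀ j, γ j ≠ 0) (β : Fin n → ℂ)
    (g : Fin n → ℂ → ℂ) (hg : ∀ j, ContDiff ℂ 2 (g j))
    (ζ lam : Fin n → ℂ)
    (hζ : ∀ j, ζ j = ((α j) ^ 2 + (γ j) ^ 2) / γ j)
    (hlam : ∀ j, lam j =
      -(((α j) ^ 2 * γ j + (γ j) ^ 3 - (α j) ^ 3 - α j * (γ j) ^ 2) / (γ j) ^ 2))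
    (w : ℂ → ℂ → ℂ → ℂ → ℂ)
    (hw : w = fun η ξ q y =>
      ∑ j : Fin n, g j (α j * η + γ j * ξ + ζ j * q + lam j * y + β j)) :
    ∀ η ξ q y : ℂ,
      pd1 (pd1 w) η ξ q y + pd2 (pd2 w) η ξ q y - pd2 (pd3 w) η ξ q y = 0
      ∧ pd2 (pd3 w) η ξ q y - pd1 (pd3 w) η ξ q y + pd2 (pd4 w) η ξ q y = 0
      ∧ pd2 (pd3 w) η ξ q y + pd1 (pd3 w) η ξ q y - pd3 (pd3 w) η ξ q y
          + pd1 (pd4 w) η ξ q y = 0 := by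
  have hgd : ∀ j, Differentiable ℂ (g j) := fun j => (hg j).differentiable two_ne_zero
  have hg2 : ∀ j, ContDiff ℂ 1 (deriv (g j)) := by
    intro j
    have := (contDiff_succ_iff_deriv (n := 1)).mp (by exact_mod_cast hg j)
    exact this.2.2
  have hg'd : ∀ j, Differentiable ℂ (deriv (g j)) :=
    fun j => (hg2 j).differentiable one_ne_zero
  -- derivative tangent facts for the four linear arguments
  have hA1 : ∀ (b c d t : ℂ) (j : Fin n),
      HasDerivAt (fun s => α j * s + γ j * b + ζ j * c + lam j * d + β j) (α j) t := by
    intro b c d t j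
    simpa using (((((hasDerivAt_id t).const_mul (α j)).add_const (γ j * b)).add_const
      (ζ j * c)).add_const (lam j * d)).add_const (β j)
  have hA2 : ∀ (a c d t : ℂ) (j : Fin n),
      HasDerivAt (fun s => α j * a + γ j * s + ζ j * c + lam j * d + β j) (γ j) t := by
    intro a c d t j
    simpa using ((((((hasDerivAt_id t).const_mul (γ j)).const_add (α j * a)).add_const
      (ζ j * c)).add_const (lam j * d)).add_const (β j))
  have hA3 : ∀ (a b d t : ℂ) (j : Fin n),
      HasDerivAt (fun s => α j * a + γ j * b + ζ j * s + lam j * d + β j) (ζ j) t := by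
    intro a b d t j
    simpa using (((((hasDerivAt_id t).const_mul (ζ j)).const_add
      (α j * a + γ j * b)).add_const (lam j * d)).add_const (β j))
  have hA4 : ∀ (a b c t : ℂ) (j : Fin n),
      HasDerivAt (fun s => α j * a + γ j * b + ζ j * c + lam j * s + β j) (lam j) t := by
    intro a b c t j
    simpa using ((((hasDerivAt_id t).const_mul (lam j)).const_add
      (α j * a + γ j * b + ζ j * c)).add_const (β j))
  -- first partial derivatives
  have hp1 : pd1 w = fun a b c d => ∑ j : Fin n,
      α j * deriv (g j) (α j * a + γ j * b + ζ j * c + lam j * d + β j) := by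
    subst hw; funext a b c d
    exact key g hgd α (fun j s => α j * s + γ j * b + ζ j * c + lam j * d + β j) a
      (fun j => hA1 b c d a j)
  have hp2 : pd2 w = fun a b c d => ∑ j : Fin n,
      γ j * deriv (g j) (α j * a + γ j * b + ζ j * c + lam j * d + β j) := by
    subst hw; funext a b c d
    exact key g hgd γ (fun j s => α j * a + γ j * s + ζ j * c + lam j * d + β j) b
      (fun j => hA2 a c d b j)
  have hp3 : pd3 w = fun a b c d => ∑ j : Fin n,
      ζ j * deriv (g j) (α j * a + γ j * b + ζ j * c + lam j * d + β j) := by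
    subst hw; funext a b c d
    exact key g hgd ζ (fun j s => α j * a + γ j * b + ζ j * s + lam j * d + β j) c
      (fun j => hA3 a b d c j)
  have hp4 : pd4 w = fun a b c d => ∑ j : Fin n,
      lam j * deriv (g j) (α j * a + γ j * b + ζ j * c + lam j * d + β j) := by
    subst hw; funext a b c d
    exact key g hgd lam (fun j s => α j * a + γ j * b + ζ j * c + lam j * s + β j) d
      (fun j => hA4 a b c d j)
  -- generic second derivative computation
  have H : ∀ (cA cB : Fin n → ℂ) (A : Fin n → ℂ → ℂ) (t : ℂ),
      (∀ j, HasDerivAt (A j) (cA j) t) →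
      deriv (fun s => ∑ j : Fin n, cB j * deriv (g j) (A j s)) t
        = ∑ j : Fin n, cA j * (cB j * deriv (deriv (g j)) (A j t)) := by
    intro cA cB A t hA
    have := key (fun j x => cB j * deriv (g j) x)
      (fun j => (hg'd j).const_mul _) cA A t hA
    rw [this]
    refine Finset.sum_congr rfl fun j _ => ?_
    rw [deriv_const_mul _ ((hg'd j) (A j t))]
  intro η ξ q y
  set G : Fin n → ℂ := fun j =>
    deriv (deriv (g j)) (α j * η + γ j * ξ + ζ j * q + lam j * y + β j) with hG
  -- second partials
  have h11 : pd1 (pd1 w) η ξ q y = ∑ j : Fin n, α j * (α j * G j) := by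
    show deriv (fun s => pd1 w s ξ q y) η = _
    simp only [hp1]
    exact H α α (fun j s => α j * s + γ j * ξ + ζ j * q + lam j * y + β j) η
      (fun j => hA1 ξ q y η j)
  have h22 : pd2 (pd2 w) η ξ q y = ∑ j : Fin n, γ j * (γ j * G j) := by
    show deriv (fun s => pd2 w η s q y) ξ = _
    simp only [hp2]
    exact H γ γ (fun j s => α j * η + γ j * s + ζ j * q + lam j * y + β j) ξ
      (fun j => hA2 η q y ξ j)
  have h23 : pd2 (pd3 w) η ξ q y = ∑ j : Fin n, γ j * (ζ j * G j) := by
    show deriv (fun s => pd3 w η s q y) ξ = _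
    simp only [hp3]
    exact H γ ζ (fun j s => α j * η + γ j * s + ζ j * q + lam j * y + β j) ξ
      (fun j => hA2 η q y ξ j)
  have h13 : pd1 (pd3 w) η ξ q y = ∑ j : Fin n, α j * (ζ j * G j) := by
    show deriv (fun s => pd3 w s ξ q y) η = _
    simp only [hp3]
    exact H α ζ (fun j s => α j * s + γ j * ξ + ζ j * q + lam j * y + β j) η
      (fun j => hA1 ξ q y η j)
  have h24 : pd2 (pd4 w) η ξ q y = ∑ j : Fin n, γ j * (lam j * G j) := by
    show deriv (fun s => pd4 w η s q y) ξ = _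
    simp only [hp4]
    exact H γ lam (fun j s => α j * η + γ j * s + ζ j * q + lam j * y + β j) ξ
      (fun j => hA2 η q y ξ j)
  have h33 : pd3 (pd3 w) η ξ q y = ∑ j : Fin n, ζ j * (ζ j * G j) := by
    show deriv (fun s => pd3 w η ξ s y) q = _
    simp only [hp3]
    exact H ζ ζ (fun j s => α j * η + γ j * ξ + ζ j * s + lam j * y + β j) q
      (fun j => hA3 η ξ y q j)
  have h14 : pd1 (pd4 w) η ξ q y = ∑ j : Fin n, α j * (lam j * G j) := by
    show deriv (fun s => pd4 w s ξ q y) η = _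
    simp only [hp4]
    exact H α lam (fun j s => α j * s + γ j * ξ + ζ j * q + lam j * y + β j) η
      (fun j => hA1 ξ q y η j)
  refine ⟨?_, ?_, ?_⟩
  · rw [h11, h22, h23, ← Finset.sum_add_distrib, ← Finset.sum_sub_distrib]
    refine Finset.sum_eq_zero fun j _ => ?_
    rw [hζ j]
    field_simp [hγ j]
    ring
  · rw [h23, h13, h24, ← Finset.sum_sub_distrib, ← Finset.sum_add_distrib]
    refine Finset.sum_eq_zero fun j _ => ?_
    rw [hζ j, hlam j]
    field_simp [hγ j]
    ring
  · rw [h23, h13, h33, h14, ← Finset.sum_add_distrib, ← Finset.sum_sub_distrib,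
      ← Finset.sum_add_distrib]
    refine Finset.sum_eq_zero fun j _ => ?_
    rw [hζ j, hlam j]
    field_simp [hγ j]
    ring
end
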